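/- Let d < n be positive integers with d ≡ r (mod 2), r ∈ {0,1}. Let F be a family of subsets of [n] such that every symmetric difference A Δ B of two members of F has size at most d. Then |F| ≤ 2^r · ∑_{k=0}^{⌊d/2⌋} C(n−r, k). -/

import Mathlib

open Finset
open scoped symmDiff FinsetFamily

namespace KleitmanAux

set_option maxHeartbeats 800000

variable {n : ℕ}

lemma diam_down_compression {α : Type*} [DecidableEq α] {d : ℕ} (a : α)
    (F : Finset (Finset α)) (h : ∀ A ∈ F, ∀ B ∈ F, (A ∆ B).card ≤ d) :
    ∀ A ∈ Down.compression a F, ∀ B ∈ Down.compression a F, (A ∆ B).card ≤ d := by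
  classical
  -- key case: A of type (i), B of type (ii)
  have key : ∀ A, (A ∈ F ∧ A.erase a ∈ F) → ∀ B, (B ∉ F ∧ insert a B ∈ F) → (A ∆ B).card ≤ d := by
    rintro A ⟨hA, hAe⟩ B ⟨hB, hBi⟩
    have haB : a ∉ B := by
      intro haB
      rw [insert_eq_of_mem haB] at hBi
      exact hB hBi
    by_cases haA : a ∈ A
    · have : A ∆ B = (A.erase a) ∆ (insert a B) := by
        ext x
        by_cases hx : x = a <;>
          simp [mem_symmDiff, mem_erase, mem_insert, hx, haA, haB]
      rw [this]
      exact h _ hAe _ hBi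
    · have : A ∆ (insert a B) = insert a (A ∆ B) := by
        ext x
        by_cases hx : x = a <;>
          simp [mem_symmDiff, mem_insert, hx, haA, haB]
      have h2 := h _ hA _ hBi
      rw [this, card_insert_of_notMem (by simp [mem_symmDiff, haA, haB])] at h2
      omega
  intro A hA B hB
  rw [Down.mem_compression] at hA hB
  rcases hA with hA | hA <;> rcases hB with hB | hB
  · exact h _ hA.1 _ hB.1
  · exact key _ hA _ hB
  · rw [symmDiff_comm]
    exact key _ hB _ hA
  · -- both of type (ii)
    have haA : a ∉ A := by
      intro ha; rw [insert_eq_of_mem ha] at hA; exact hA.1 hA.2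
    have haB : a ∉ B := by
      intro ha; rw [insert_eq_of_mem ha] at hB; exact hB.1 hB.2
    have : (insert a A) ∆ (insert a B) = A ∆ B := by
      ext x
      by_cases hx : x = a <;> simp [mem_symmDiff, mem_insert, hx, haA, haB]
    calc (A ∆ B).card = ((insert a A) ∆ (insert a B)).card := by rw [this]
    _ ≤ d := h _ hA.2 _ hB.2


lemma down_measure_lt {α : Type*} [DecidableEq α] (a : α) (F : Finset (Finset α))
    (hne : Down.compression a F ≠ F) :
    ∑ A ∈ Down.compression a F, A.card < ∑ A ∈ F, A.card := by
  classical
  set F₁ : Finset (Finset α) := {s ∈ F | s.erase a ∈ F} with hF₁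
  set F₂ : Finset (Finset α) := {s ∈ F | s.erase a ∉ F} with hF₂
  have hmem : ∀ s ∈ F₂, a ∈ s := by
    intro s hs
    rw [hF₂, mem_filter] at hs
    by_contra ha
    rw [erase_eq_of_notMem ha] at hs
    exact hs.2 hs.1
  have himg : {s ∈ F.image (fun s ↦ erase s a) | s ∉ F} = F₂.image (fun s ↦ erase s a) := by
    ext t
    simp only [mem_filter, mem_image, hF₂]
    constructor
    · rintro ⟨⟨s, hs, rfl⟩, ht⟩
      exact ⟨s, ⟨hs, ht⟩, rfl⟩
    · rintro ⟨s, ⟨hs, ht⟩, rfl⟩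
      exact ⟨⟨s, hs, rfl⟩, ht⟩
  have hinj : Set.InjOn (fun s ↦ erase s a) F₂ := by
    intro s hs u hu he
    have := hmem s hs
    have := hmem u hu
    simp only at he
    rw [← insert_erase (hmem s hs), he, insert_erase (hmem u hu)]
  have hne₂ : F₂.Nonempty := by
    rw [nonempty_iff_ne_empty]
    intro h0
    apply hne
    have hF₁F : F₁ = F := by
      conv_rhs => rw [← filter_union_filter_not_eq (fun s ↦ s.erase a ∈ F) F]
      rw [← hF₁, ← hF₂, h0, union_empty]
    have : Down.compression a F = F₁ ∪ (F.image (fun s ↦ erase s a)).filter (fun s ↦ s ∉ F) := by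
      rw [Down.compression, disjUnion_eq_union, hF₁]
    rw [this, himg, h0, image_empty, union_empty, hF₁F]
  have hsum : ∑ A ∈ Down.compression a F, A.card
      = ∑ A ∈ F₁, A.card + ∑ A ∈ F₂, (A.card - 1) := by
    rw [Down.compression, sum_disjUnion, himg, sum_image hinj]
    simp only [← hF₁]
    congr 1
    refine sum_congr rfl fun s hs ↦ ?_
    exact card_erase_of_mem (hmem s hs)
  have hsplit : ∑ A ∈ F, A.card = ∑ A ∈ F₁, A.card + ∑ A ∈ F₂, A.card := by
    rw [hF₁, hF₂, sum_filter_add_sum_filter_not]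
  rw [hsum, hsplit]
  have : ∑ A ∈ F₂, (A.card - 1) < ∑ A ∈ F₂, A.card := by
    refine sum_lt_sum_of_nonempty hne₂ fun s hs ↦ ?_
    have := card_pos.2 ⟨a, hmem s hs⟩
    omega
  omega

lemma downset_of_erase_closed {α : Type*} [DecidableEq α] (F : Finset (Finset α))
    (h : ∀ s ∈ F, ∀ a, s.erase a ∈ F) : ∀ A ∈ F, ∀ B ⊆ A, B ∈ F := by
  classical
  have : ∀ (m : ℕ) (A : Finset α), A ∈ F → ∀ B ⊆ A, (A \ B).card = m → B ∈ F := by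
    intro m
    induction m with
    | zero =>
      intro A hA B hBA hcard
      have : A = B := subset_antisymm (by
        intro x hx
        by_contra hxB
        rw [card_eq_zero] at hcard
        have : x ∈ A \ B := mem_sdiff.2 ⟨hx, hxB⟩
        rw [hcard] at this
        exact notMem_empty x this) hBA
      rwa [← this]
    | succ m ih =>
      intro A hA B hBA hcard
      have hne : (A \ B).Nonempty := by rw [← card_pos, hcard]; omega
      obtain ⟨x, hx⟩ := hne
      rw [mem_sdiff] at hx
      refine ih (A.erase x) (h A hA x) B ?_ ?_
      · intro b hb
        exact mem_erase.2 ⟨fun hbx ↦ hx.2 (hbx ▸ hb), hBA hb⟩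
      · have : A.erase x \ B = (A \ B).erase x := by
          ext y
          simp only [mem_sdiff, mem_erase]
          tauto
        rw [this, card_erase_of_mem (mem_sdiff.2 hx), hcard]
        omega
  intro A hA B hBA
  exact this _ A hA B hBA rfl


lemma exists_downset {n d : ℕ} (F : Finset (Finset (Fin n)))
    (h : ∀ A ∈ F, ∀ B ∈ F, (A ∆ B).card ≤ d) :
    ∃ G : Finset (Finset (Fin n)), G.card = F.card ∧
      (∀ A ∈ G, ∀ B ∈ G, (A ∆ B).card ≤ d) ∧ (∀ A ∈ G, ∀ B ⊆ A, B ∈ G) := by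
  by_cases hall : ∀ a : Fin n, Down.compression a F = F
  · refine ⟨F, rfl, h, downset_of_erase_closed F fun s hs a ↦ ?_⟩
    rw [← hall a]
    exact Down.erase_mem_compression hs
  · push_neg at hall
    obtain ⟨a, ha⟩ := hall
    have hlt := down_measure_lt a F ha
    obtain ⟨G, h1, h2, h3⟩ := exists_downset (Down.compression a F) (diam_down_compression a F h)
    exact ⟨G, h1.trans (Down.card_compression a F), h2, h3⟩
termination_by ∑ A ∈ F, A.card


lemma compress_singleton {x y : Fin n} (hxy : x ≠ y) (A : Finset (Fin n))
    (hx : x ∉ A) (hy : y ∈ A) :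
    UV.compress {x} {y} A = insert x (A.erase y) := by
  rw [UV.compress_of_disjoint_of_le (disjoint_singleton_left.2 hx) (singleton_subset_iff.2 hy)]
  ext z
  simp only [mem_sdiff, sup_eq_union, mem_union, mem_singleton, mem_insert, mem_erase]
  by_cases hz : z = x <;> by_cases hz' : z = y <;> simp [hz, hz', hxy] <;> tauto

lemma compress_eq_self {x y : Fin n} (A : Finset (Fin n)) (h : ¬(x ∉ A ∧ y ∈ A)) :
    UV.compress {x} {y} A = A := by
  rw [UV.compress]
  rw [if_neg]
  simpa only [disjoint_singleton_left, Finset.le_iff_subset, singleton_subset_iff] using h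

-- intersection-card helpers
section helpers
variable {x y : Fin n} {t : ℕ} {U V : Finset (Fin n)}

lemma helper_both (hxy : x ≠ y) (hU : y ∈ U) (hV : y ∈ V) (hxU : x ∉ U) (hxV : x ∉ V)
    (h : t ≤ (U ∩ V).card) :
    t ≤ ((insert x (U.erase y)) ∩ (insert x (V.erase y))).card := by
  have : (insert x (U.erase y)) ∩ (insert x (V.erase y)) = insert x ((U ∩ V).erase y) := by
    ext z
    simp only [mem_inter, mem_insert, mem_erase]
    tauto
  rw [this, card_insert_of_notMem (by simp [hxU]), card_erase_of_mem (by simp [hU, hV])]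
  omega

lemma helper_noy (hyV : y ∉ V) (h : t ≤ (U ∩ V).card) :
    t ≤ ((insert x (U.erase y)) ∩ V).card := by
  refine h.trans (card_le_card ?_)
  intro z hz
  rw [mem_inter] at hz
  rw [mem_inter, mem_insert, mem_erase]
  exact ⟨Or.inr ⟨fun hzy ↦ hyV (hzy ▸ hz.2), hz.1⟩, hz.2⟩

lemma helper_xV (hxU : x ∉ U) (hxV : x ∈ V) (h : t ≤ (U ∩ V).card) :
    t ≤ ((insert x (U.erase y)) ∩ V).card := by
  have hsub : insert x ((U ∩ V).erase y) ⊆ (insert x (U.erase y)) ∩ V := by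
    intro z hz
    rw [mem_insert, mem_erase, mem_inter] at hz
    rw [mem_inter, mem_insert, mem_erase]
    rcases hz with rfl | ⟨hzy, hz1, hz2⟩
    · exact ⟨Or.inl rfl, hxV⟩
    · exact ⟨Or.inr ⟨hzy, hz1⟩, hz2⟩
  refine le_trans ?_ (card_le_card hsub)
  rw [card_insert_of_notMem (by simp [hxU])]
  have := Finset.pred_card_le_card_erase (s := U ∩ V) (a := y)
  omega
end helpers

lemma int_compression {x y : Fin n} (hxy : x ≠ y) {t : ℕ} {F : Finset (Finset (Fin n))}
    (h : ∀ A ∈ F, ∀ B ∈ F, t ≤ (A ∩ B).card) :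
    ∀ A ∈ UV.compression {x} {y} F, ∀ B ∈ UV.compression {x} {y} F, t ≤ (A ∩ B).card := by
  have nontriv : ∀ B ∈ F, UV.compress {x} {y} B ∉ F → x ∉ B ∧ y ∈ B := by
    intro B hB hc
    by_contra hcon
    rw [compress_eq_self B hcon] at hc
    exact hc hB
  have key : ∀ P ∈ F, UV.compress {x} {y} P ∈ F → ∀ B ∈ F, x ∉ B → y ∈ B →
      t ≤ (P ∩ insert x (B.erase y)).card := by
    intro P hP hPc B hB hxB hyB
    by_cases hyP : y ∈ P
    · by_cases hxP : x ∈ P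
      · rw [inter_comm]
        exact helper_xV hxB hxP (h _ hB _ hP)
      · rw [compress_singleton hxy P hxP hyP] at hPc
        have h1 := h _ hPc _ hB
        have e1 : (insert x (P.erase y)) ∩ B = (P ∩ B).erase y := by
          ext z
          simp only [mem_inter, mem_insert, mem_erase]
          constructor
          · rintro ⟨rfl | ⟨hzy, hzP⟩, hzB⟩
            · exact absurd hzB hxB
            · exact ⟨hzy, hzP, hzB⟩
          · rintro ⟨hzy, hzP, hzB⟩
            exact ⟨Or.inr ⟨hzy, hzP⟩, hzB⟩
        rw [e1, card_erase_of_mem (mem_inter.2 ⟨hyP, hyB⟩)] at h1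
        have e2 : P ∩ insert x (B.erase y) = (P ∩ B).erase y := by
          ext z
          simp only [mem_inter, mem_insert, mem_erase]
          constructor
          · rintro ⟨hzP, rfl | ⟨hzy, hzB⟩⟩
            · exact absurd hzP hxP
            · exact ⟨hzy, hzP, hzB⟩
          · rintro ⟨hzy, hzP, hzB⟩
            exact ⟨hzP, Or.inr ⟨hzy, hzB⟩⟩
        rw [e2, card_erase_of_mem (mem_inter.2 ⟨hyP, hyB⟩)]
        omega
    · rw [inter_comm]
      exact helper_noy hyP (h _ hB _ hP)
  intro A hA B hB
  rw [UV.mem_compression] at hA hB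
  rcases hA with ⟨hA, hAc⟩ | ⟨hA, A₀, hA₀, rfl⟩ <;> rcases hB with ⟨hB, hBc⟩ | ⟨hB, B₀, hB₀, rfl⟩
  · exact h _ hA _ hB
  · obtain ⟨hx₀, hy₀⟩ := nontriv B₀ hB₀ (by assumption)
    rw [compress_singleton hxy B₀ hx₀ hy₀]
    exact key A hA hAc B₀ hB₀ hx₀ hy₀
  · obtain ⟨hx₀, hy₀⟩ := nontriv A₀ hA₀ (by assumption)
    rw [compress_singleton hxy A₀ hx₀ hy₀, inter_comm]
    exact key B hB hBc A₀ hA₀ hx₀ hy₀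
  · obtain ⟨hxA, hyA⟩ := nontriv A₀ hA₀ (by assumption)
    obtain ⟨hxB, hyB⟩ := nontriv B₀ hB₀ (by assumption)
    rw [compress_singleton hxy A₀ hxA hyA, compress_singleton hxy B₀ hxB hyB]
    exact helper_both hxy hyA hyB hxA hxB (h _ hA₀ _ hB₀)


lemma singleton_huv {x y : Fin n} (F : Finset (Finset (Fin n))) :
    ∀ a ∈ ({x} : Finset (Fin n)), ∃ b ∈ ({y} : Finset (Fin n)),
      UV.IsCompressed (({x} : Finset (Fin n)).erase a) (({y} : Finset (Fin n)).erase b) F := by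
  intro a ha
  rw [mem_singleton] at ha
  subst ha
  exact ⟨y, mem_singleton_self y, by simp [UV.isCompressed_self]⟩

lemma shadow_iterate_compression_subset (x y : Fin n) (F : Finset (Finset (Fin n))) (j : ℕ) :
    ∂^[j] (UV.compression {x} {y} F) ⊆ UV.compression {x} {y} (∂^[j] F) := by
  induction j generalizing F with
  | zero => exact fun A hA ↦ hA
  | succ j ih =>
    rw [Function.iterate_succ_apply, Function.iterate_succ_apply]
    calc ∂^[j] (∂ (UV.compression {x} {y} F))
        ⊆ ∂^[j] (UV.compression {x} {y} (∂ F)) := by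
          exact (shadow_monotone.iterate j) (UV.shadow_compression_subset_compression_shadow _ _ (singleton_huv F))
      _ ⊆ UV.compression {x} {y} (∂^[j] (∂ F)) := ih _

lemma shadow_iterate_compression_card_le (x y : Fin n) (F : Finset (Finset (Fin n))) (j : ℕ) :
    (∂^[j] (UV.compression {x} {y} F)).card ≤ (∂^[j] F).card := by
  calc (∂^[j] (UV.compression {x} {y} F)).card
      ≤ (UV.compression {x} {y} (∂^[j] F)).card :=
        card_le_card (shadow_iterate_compression_subset x y F j)
    _ = (∂^[j] F).card := UV.card_compression _ _ _

def Shifted {n : ℕ} (s : Finset (Fin n)) (F : Finset (Finset (Fin n))) : Prop :=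
  ∀ A ∈ F, ∀ x ∈ s, ∀ y ∈ s, x < y → y ∈ A → x ∉ A → insert x (A.erase y) ∈ F

def fmeasure (F : Finset (Finset (Fin n))) : ℕ := ∑ A ∈ F, ∑ a ∈ A, (a : ℕ)

lemma fmeasure_compression_lt {x y : Fin n} (hxy : x < y) (F : Finset (Finset (Fin n)))
    (hne : UV.compression {x} {y} F ≠ F) :
    fmeasure (UV.compression {x} {y} F) < fmeasure F := by
  have q : ∀ Q ∈ {A ∈ F | UV.compress {x} {y} A ∉ F}, UV.compress {x} {y} Q ≠ Q := by
    simp_rw [mem_filter]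
    intro Q hQ h
    rw [h] at hQ
    exact hQ.2 hQ.1
  have uA : {A ∈ F | UV.compress {x} {y} A ∈ F} ∪ {A ∈ F | UV.compress {x} {y} A ∉ F} = F :=
    filter_union_filter_not_eq _ _
  have ne₂ : {A ∈ F | UV.compress {x} {y} A ∉ F}.Nonempty := by
    refine nonempty_iff_ne_empty.2 fun z ↦ hne ?_
    rw [UV.compression, filter_image, z, image_empty, union_empty]
    rwa [z, union_empty] at uA
  rw [fmeasure, fmeasure, UV.compression, sum_union UV.compress_disjoint]
  conv_rhs => rw [← uA]
  rw [sum_union (disjoint_filter_filter_not _ _ _), add_lt_add_iff_left, filter_image,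
    sum_image UV.compress_injOn]
  refine sum_lt_sum_of_nonempty ne₂ fun A hA ↦ ?_
  have hne' := q A hA
  have hxA : x ∉ A ∧ y ∈ A := by
    by_contra hcon
    exact hne' (compress_eq_self A hcon)
  rw [compress_singleton hxy.ne A hxA.1 hxA.2, sum_insert (by simp [hxA.1]),
    ← Finset.add_sum_erase _ _ hxA.2]
  have : (x : ℕ) < (y : ℕ) := hxy
  omega

lemma exists_shifted (s : Finset (Fin n)) (k t j : ℕ) (F : Finset (Finset (Fin n)))
    (hsub : ∀ A ∈ F, A ⊆ s) (hunif : ∀ A ∈ F, A.card = k)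
    (hint : ∀ A ∈ F, ∀ B ∈ F, t ≤ (A ∩ B).card) :
    ∃ G : Finset (Finset (Fin n)), (∀ A ∈ G, A ⊆ s) ∧ (∀ A ∈ G, A.card = k) ∧
      (∀ A ∈ G, ∀ B ∈ G, t ≤ (A ∩ B).card) ∧ G.card = F.card ∧
      (∂^[j] G).card ≤ (∂^[j] F).card ∧ Shifted s G := by
  by_cases hall : ∀ x ∈ s, ∀ y ∈ s, x < y → UV.compression {x} {y} F = F
  · refine ⟨F, hsub, hunif, hint, rfl, le_rfl, ?_⟩
    intro A hA x hx y hy hlt hyA hxA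
    have h1 : UV.compress {x} {y} A ∈ UV.compression {x} {y} F := UV.compress_mem_compression hA
    rw [hall x hx y hy hlt, compress_singleton hlt.ne A hxA hyA] at h1
    exact h1
  · push_neg at hall
    obtain ⟨x, hx, y, hy, hlt, hne⟩ := hall
    have hdec := fmeasure_compression_lt hlt F hne
    set F' := UV.compression {x} {y} F with hF'
    have hsub' : ∀ A ∈ F', A ⊆ s := by
      intro A hA
      rw [UV.mem_compression] at hA
      rcases hA with ⟨hA, -⟩ | ⟨-, B, hB, rfl⟩
      · exact hsub A hA
      · by_cases hc : x ∉ B ∧ y ∈ B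
        · rw [compress_singleton hlt.ne B hc.1 hc.2]
          intro z hz
          rw [mem_insert, mem_erase] at hz
          rcases hz with rfl | ⟨-, hz⟩
          · exact hx
          · exact hsub B hB hz
        · rw [compress_eq_self B hc]
          exact hsub B hB
    have hunif' : ∀ A ∈ F', A.card = k := by
      intro A hA
      rw [UV.mem_compression] at hA
      rcases hA with ⟨hA, -⟩ | ⟨-, B, hB, rfl⟩
      · exact hunif A hA
      · rw [UV.card_compress (by simp)]
        exact hunif B hB
    obtain ⟨G, g1, g2, g3, g4, g5, g6⟩ :=
      exists_shifted s k t j F' hsub' hunif' (int_compression hlt.ne hint)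
    exact ⟨G, g1, g2, g3, g4.trans (UV.card_compression _ _ _), 
      g5.trans (shadow_iterate_compression_card_le x y F j), g6⟩
termination_by fmeasure F


lemma ist_base (s : Finset (Fin n)) (k t : ℕ) (htk : t ≤ k) (hs : s.card + t ≤ 2 * k)
    (F : Finset (Finset (Fin n))) (hsub : ∀ A ∈ F, A ⊆ s) (hunif : ∀ A ∈ F, A.card = k) :
    F.card ≤ (∂^[t] F).card := by
  classical
  set L := ∂^[t] F with hL
  have hchoose : 0 < k.choose t := Nat.choose_pos htk
  have hm : ∀ A ∈ F, k.choose t ≤ (L.bipartiteAbove (fun A C ↦ C ⊆ A) A).card := by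
    intro A hA
    have hsubset : A.powersetCard (k - t) ⊆ L.bipartiteAbove (fun A C ↦ C ⊆ A) A := by
      intro C hC
      rw [mem_powersetCard] at hC
      rw [bipartiteAbove, mem_filter]
      refine ⟨?_, hC.1⟩
      rw [hL, mem_shadow_iterate_iff_exists_sdiff]
      refine ⟨A, hA, hC.1, ?_⟩
      rw [card_sdiff_of_subset hC.1, hC.2, hunif A hA]
      omega
    calc k.choose t = (A.powersetCard (k - t)).card := by
          rw [card_powersetCard, hunif A hA, Nat.choose_symm htk]
      _ ≤ _ := card_le_card hsubset
  have hn' : ∀ C ∈ L, (F.bipartiteBelow (fun A C ↦ C ⊆ A) C).card ≤ k.choose t := by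
    intro C hC
    rw [hL, mem_shadow_iterate_iff_exists_sdiff] at hC
    obtain ⟨A₀, hA₀, hCA₀, hcard₀⟩ := hC
    have hCk : C.card = k - t := by
      have h1 := card_sdiff_of_subset hCA₀
      have h2 := card_le_card hCA₀
      rw [hunif A₀ hA₀] at h1 h2
      omega
    have hCs : C ⊆ s := hCA₀.trans (hsub A₀ hA₀)
    have hinj : ∀ A ∈ F.bipartiteBelow (fun A C ↦ C ⊆ A) C,
        A \ C ∈ (s \ C).powersetCard t := by
      intro A hA
      rw [bipartiteBelow, mem_filter] at hA
      rw [mem_powersetCard]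
      constructor
      · exact sdiff_subset_sdiff (hsub A hA.1) Subset.rfl
      · rw [card_sdiff_of_subset hA.2, hunif A hA.1, hCk]
        omega
    calc (F.bipartiteBelow (fun A C ↦ C ⊆ A) C).card
        ≤ ((s \ C).powersetCard t).card := by
          refine card_le_card_of_injOn (fun A ↦ A \ C) hinj ?_
          intro A hA B hB hAB
          rw [mem_coe, bipartiteBelow, mem_filter] at hA hB
          rw [← sdiff_union_of_subset hA.2, ← sdiff_union_of_subset hB.2]
          simp only at hAB
          rw [hAB]
      _ = (s.card - (k - t)).choose t := by
          rw [card_powersetCard, card_sdiff_of_subset hCs, hCk]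
      _ ≤ k.choose t := Nat.choose_le_choose t (by omega)
  have := card_mul_le_card_mul (r := fun (A C : Finset (Fin n)) ↦ C ⊆ A) hm hn'
  exact Nat.le_of_mul_le_mul_right this hchoose


lemma ist_shifted : ∀ (N : ℕ) (s : Finset (Fin n)), s.card ≤ N → ∀ (k t : ℕ), 1 ≤ t →
    ∀ F : Finset (Finset (Fin n)), (∀ A ∈ F, A ⊆ s) → (∀ A ∈ F, A.card = k) →
    (∀ A ∈ F, ∀ B ∈ F, t ≤ (A ∩ B).card) → Shifted s F → F.card ≤ (∂^[t] F).card := by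
  intro N
  induction N with
  | zero =>
    intro s hsN k t ht F hsub hunif hint _hsh
    rcases F.eq_empty_or_nonempty with rfl | ⟨A₀, hA₀⟩
    · simp
    · exfalso
      have h1 : A₀.card ≤ s.card := card_le_card (hsub A₀ hA₀)
      have h2 := hint A₀ hA₀ A₀ hA₀
      rw [inter_self] at h2
      omega
  | succ N ih =>
    intro s hsN k t ht F hsub hunif hint hsh
    rcases F.eq_empty_or_nonempty with rfl | ⟨A₀, hA₀⟩
    · simp
    have htk : t ≤ k := by
      have h2 := hint A₀ hA₀ A₀ hA₀
      rwa [inter_self, hunif A₀ hA₀] at h2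
    by_cases hbase : s.card + t ≤ 2 * k
    · exact ist_base s k t htk hbase F hsub hunif
    push_neg at hbase
    have hk1 : 1 ≤ k := le_trans ht htk
    have hsne : s.Nonempty := by
      obtain ⟨a, ha⟩ := card_pos.1 (by rw [hunif A₀ hA₀]; omega : 0 < A₀.card)
      exact ⟨a, hsub A₀ hA₀ ha⟩
    set M := s.max' hsne with hM
    have hMs : M ∈ s := s.max'_mem hsne
    set s' := s.erase M with hs'
    have hs'card : s'.card ≤ N := by
      rw [hs', card_erase_of_mem hMs]
      omega
    set F₀ := F.filter (fun A ↦ M ∉ A) with hF₀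
    set F₁ := (F.filter (fun A ↦ M ∈ A)).image (fun A ↦ A.erase M) with hF₁
    have hmemF₁ : ∀ A, A ∈ F₁ ↔ ∃ B ∈ F, M ∈ B ∧ A = B.erase M := by
      intro A
      rw [hF₁, mem_image]
      constructor
      · rintro ⟨B, hB, rfl⟩
        rw [mem_filter] at hB
        exact ⟨B, hB.1, hB.2, rfl⟩
      · rintro ⟨B, hB, hMB, rfl⟩
        exact ⟨B, mem_filter.2 ⟨hB, hMB⟩, rfl⟩
    -- cardinality split
    have hcardsplit : F.card = F₀.card + F₁.card := by
      rw [hF₁, card_image_of_injOn, hF₀]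
      · rw [add_comm, card_filter_add_card_filter_not]
      · intro A hA B hB hAB
        rw [mem_coe, mem_filter] at hA hB
        simp only at hAB
        rw [← insert_erase hA.2, hAB, insert_erase hB.2]
    -- F₀ properties
    have hsub₀ : ∀ A ∈ F₀, A ⊆ s' := by
      intro A hA
      rw [hF₀, mem_filter] at hA
      intro z hz
      exact mem_erase.2 ⟨fun h ↦ hA.2 (h ▸ hz), hsub A hA.1 hz⟩
    have hF₀F : F₀ ⊆ F := filter_subset _ _
    have hsh₀ : Shifted s' F₀ := by
      intro A hA x hx y hy hxy hyA hxA
      rw [hF₀, mem_filter] at hA ⊢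
      refine ⟨hsh A hA.1 x (mem_of_mem_erase hx) y (mem_of_mem_erase hy) hxy hyA hxA, ?_⟩
      rw [mem_insert, mem_erase]
      rintro (rfl | ⟨-, h⟩)
      · exact (mem_erase.1 hx).1 rfl
      · exact hA.2 h
    -- F₁ properties
    have hsub₁ : ∀ A ∈ F₁, A ⊆ s' := by
      intro A hA
      obtain ⟨B, hB, hMB, rfl⟩ := (hmemF₁ A).1 hA
      exact erase_subset_erase M (hsub B hB)
    have hunif₁ : ∀ A ∈ F₁, A.card = k - 1 := by
      intro A hA
      obtain ⟨B, hB, hMB, rfl⟩ := (hmemF₁ A).1 hA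
      rw [card_erase_of_mem hMB, hunif B hB]
    have hsh₁ : Shifted s' F₁ := by
      intro A hA x hx y hy hxy hyA hxA
      obtain ⟨B, hB, hMB, rfl⟩ := (hmemF₁ A).1 hA
      have hxM : x ≠ M := (mem_erase.1 hx).1
      have hyM : y ≠ M := (mem_erase.1 hy).1
      have hB' : insert x (B.erase y) ∈ F :=
        hsh B hB x (mem_of_mem_erase hx) y (mem_of_mem_erase hy) hxy
          (mem_of_mem_erase hyA) (fun h ↦ hxA (mem_erase.2 ⟨hxM, h⟩))
      rw [hmemF₁]
      refine ⟨insert x (B.erase y), hB',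
        mem_insert_of_mem (mem_erase.2 ⟨Ne.symm hyM, hMB⟩), ?_⟩
      ext z
      simp only [mem_erase, mem_insert]
      constructor
      · rintro (rfl | ⟨hz1, hz2, hz3⟩)
        · exact ⟨hxM, Or.inl rfl⟩
        · exact ⟨hz2, Or.inr ⟨hz1, hz3⟩⟩
      · rintro ⟨hzM, rfl | ⟨hzy, hzB⟩⟩
        · exact Or.inl rfl
        · exact Or.inr ⟨hzy, hzM, hzB⟩
    have hint₁ : ∀ A ∈ F₁, ∀ B ∈ F₁, t ≤ (A ∩ B).card := by
      intro A hA A' hA'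
      obtain ⟨B, hB, hMB, rfl⟩ := (hmemF₁ A).1 hA
      obtain ⟨B', hB', hMB', rfl⟩ := (hmemF₁ A').1 hA'
      have hBB' := hint B hB B' hB'
      have hee : B.erase M ∩ B'.erase M = (B ∩ B').erase M := by
        ext z; simp only [mem_inter, mem_erase]; tauto
      rw [hee, card_erase_of_mem (mem_inter.2 ⟨hMB, hMB'⟩)]
      by_contra hcon
      push_neg at hcon
      -- then |B ∩ B'| = t exactly; find y ∈ s outside B ∪ B'
      have hBcard := hunif B hB
      have hB'card := hunif B' hB'
      have huni : (B ∪ B').card = 2 * k - t := by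
        have := card_union_add_card_inter B B'
        have h2 : (B ∩ B').card = t := by omega
        omega
      have hBBs : B ∪ B' ⊆ s := union_subset (hsub B hB) (hsub B' hB')
      have hy : (s \ (B ∪ B')).Nonempty := by
        rw [← card_pos, card_sdiff_of_subset hBBs]
        omega
      obtain ⟨y, hy⟩ := hy
      rw [mem_sdiff, mem_union] at hy
      push_neg at hy
      obtain ⟨hys, hyB, hyB'⟩ := hy
      have hyM : y ≠ M := fun h ↦ hyB (h ▸ hMB)
      have hyltM : y < M := lt_of_le_of_ne (s.le_max' y hys) hyM
      have hBshift : insert y (B.erase M) ∈ F := hsh B hB y hys M hMs hyltM hMB hyB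
      have h3 := hint _ hBshift B' hB'
      have he2 : (insert y (B.erase M)) ∩ B' = (B ∩ B').erase M := by
        ext z
        simp only [mem_inter, mem_insert, mem_erase]
        constructor
        · rintro ⟨rfl | ⟨hzM, hzB⟩, hzB'⟩
          · exact absurd hzB' hyB'
          · exact ⟨hzM, hzB, hzB'⟩
        · rintro ⟨hzM, hzB, hzB'⟩
          exact ⟨Or.inr ⟨hzM, hzB⟩, hzB'⟩
      rw [he2, card_erase_of_mem (mem_inter.2 ⟨hMB, hMB'⟩)] at h3
      omega
    -- apply IH
    have ih₀ := ih s' hs'card k t ht F₀ hsub₀ (fun A hA ↦ hunif A (hF₀F hA)) 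
      (fun A hA B hB ↦ hint A (hF₀F hA) B (hF₀F hB)) hsh₀
    have ih₁ := ih s' hs'card (k - 1) t ht F₁ hsub₁ hunif₁ hint₁ hsh₁
    -- combine shadows
    have hS₀ : ∂^[t] F₀ ⊆ ∂^[t] F := shadow_monotone.iterate t hF₀F
    have hS₁ : ∀ C ∈ ∂^[t] F₁, insert M C ∈ ∂^[t] F ∧ M ∉ C := by
      intro C hC
      rw [mem_shadow_iterate_iff_exists_sdiff] at hC
      obtain ⟨B₁, hB₁, hCB₁, hsd⟩ := hC
      obtain ⟨B, hB, hMB, rfl⟩ := (hmemF₁ B₁).1 hB₁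
      have hMC : M ∉ C := fun h ↦ (mem_erase.1 (hCB₁ h)).1 rfl
      refine ⟨?_, hMC⟩
      rw [mem_shadow_iterate_iff_exists_sdiff]
      refine ⟨B, hB, insert_subset hMB (hCB₁.trans (erase_subset M B)), ?_⟩
      rw [← hsd]
      congr 1
      ext z
      simp only [mem_sdiff, mem_insert, mem_erase]
      tauto
    have hUnionsub : (∂^[t] F₀) ∪ (∂^[t] F₁).image (insert M) ⊆ ∂^[t] F := by
      apply union_subset hS₀
      intro D hD
      rw [mem_image] at hD
      obtain ⟨C, hC, rfl⟩ := hD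
      exact (hS₁ C hC).1
    have hdisj : Disjoint (∂^[t] F₀) ((∂^[t] F₁).image (insert M)) := by
      rw [disjoint_left]
      intro D hD₀ hD₁
      rw [mem_shadow_iterate_iff_exists_sdiff] at hD₀
      obtain ⟨A, hA, hDA, -⟩ := hD₀
      rw [mem_image] at hD₁
      obtain ⟨C, hC, rfl⟩ := hD₁
      rw [hF₀, mem_filter] at hA
      exact hA.2 (hDA (mem_insert_self M C))
    have himgcard : ((∂^[t] F₁).image (insert M)).card = (∂^[t] F₁).card := by
      apply card_image_of_injOn
      intro C hC C' hC' hCC'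
      have h1 := (hS₁ C hC).2
      have h2 := (hS₁ C' hC').2
      rw [mem_coe] at hC hC'
      simpa [h1, h2] using congrArg (fun X ↦ X.erase M) hCC'
    calc F.card = F₀.card + F₁.card := hcardsplit
      _ ≤ (∂^[t] F₀).card + (∂^[t] F₁).card := Nat.add_le_add ih₀ ih₁
      _ = ((∂^[t] F₀) ∪ (∂^[t] F₁).image (insert M)).card := by
          rw [card_union_of_disjoint hdisj, himgcard]
      _ ≤ (∂^[t] F).card := card_le_card hUnionsub

theorem ist (s : Finset (Fin n)) (k t : ℕ) (ht : 1 ≤ t) (F : Finset (Finset (Fin n)))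
    (hsub : ∀ A ∈ F, A ⊆ s) (hunif : ∀ A ∈ F, A.card = k)
    (hint : ∀ A ∈ F, ∀ B ∈ F, t ≤ (A ∩ B).card) :
    F.card ≤ (∂^[t] F).card := by
  obtain ⟨G, g1, g2, g3, g4, g5, g6⟩ := exists_shifted s k t t F hsub hunif hint
  calc F.card = G.card := g4.symm
    _ ≤ (∂^[t] G).card := ist_shifted s.card s le_rfl k t ht G g1 g2 g3 g6
    _ ≤ (∂^[t] F).card := g5


lemma level_pair {d : ℕ} (ℬ : Finset (Finset (Fin n)))
    (hunion : ∀ A ∈ ℬ, ∀ B ∈ ℬ, (A ∪ B).card ≤ d)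
    (hn : d + 2 ≤ n) (ℓ : ℕ) (hl1 : 1 ≤ ℓ) (hld : 2 * ℓ ≤ d + 1) :
    ({A ∈ ℬ | A.card = d + 1 - ℓ}).card + ({A ∈ ℬ | A.card = ℓ}).card ≤ n.choose ℓ := by
  classical
  set H := {A ∈ ℬ | A.card = d + 1 - ℓ} with hH
  set t' := n - d - 1 with ht'
  have ht'1 : 1 ≤ t' := by omega
  set 𝒢 := Hᶜˢ with h𝒢
  have hcard𝒢 : ∀ D ∈ 𝒢, D.card = n - (d + 1 - ℓ) := by
    intro D hD
    rw [h𝒢, mem_compls] at hD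
    rw [hH, mem_filter] at hD
    have : Dᶜ.card = d + 1 - ℓ := hD.2
    have hcp := Finset.card_add_card_compl D
    rw [Fintype.card_fin] at hcp
    omega
  have hint𝒢 : ∀ D ∈ 𝒢, ∀ E ∈ 𝒢, t' ≤ (D ∩ E).card := by
    intro D hD E hE
    rw [h𝒢, mem_compls, hH, mem_filter] at hD hE
    have hu := hunion _ hD.1 _ hE.1
    have : D ∩ E = (Dᶜ ∪ Eᶜ)ᶜ := by rw [compl_union, compl_compl, compl_compl]
    rw [this]
    have hcp := Finset.card_add_card_compl (Dᶜ ∪ Eᶜ)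
    rw [Fintype.card_fin] at hcp
    omega
  have hist := ist Finset.univ (n - (d + 1 - ℓ)) t' ht'1 𝒢
    (fun A _ ↦ subset_univ A) hcard𝒢 hint𝒢
  rw [h𝒢, card_compls] at hist
  set S := ∂^[t'] 𝒢 with hS
  have hScard : ∀ C ∈ S, C.card = ℓ := by
    intro C hC
    rw [hS, mem_shadow_iterate_iff_exists_sdiff] at hC
    obtain ⟨D, hD, hCD, hsd⟩ := hC
    have h1 := card_sdiff_add_card_eq_card hCD
    rw [hsd, hcard𝒢 D hD] at h1
    omega
  have hSdisj : ∀ C ∈ S, C ∉ ℬ := by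
    intro C hC hCℬ
    have hCS := hC
    rw [hS, mem_shadow_iterate_iff_exists_sdiff] at hC
    obtain ⟨D, hD, hCD, -⟩ := hC
    rw [h𝒢, mem_compls, hH, mem_filter] at hD
    have hdisj : Disjoint C Dᶜ := by
      rw [disjoint_left]
      intro z hzC hzD
      exact (mem_compl.1 hzD) (hCD hzC)
    have := hunion C hCℬ Dᶜ hD.1
    rw [card_union_of_disjoint hdisj, hScard C hCS, hD.2] at this
    omega
  have hdisj2 : Disjoint S {A ∈ ℬ | A.card = ℓ} := by
    rw [disjoint_left]
    intro C hC hC'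
    exact hSdisj C hC (mem_filter.1 hC').1
  have hsubpow : S ∪ {A ∈ ℬ | A.card = ℓ} ⊆ Finset.univ.powersetCard ℓ := by
    intro C hC
    rw [mem_powersetCard]
    refine ⟨subset_univ C, ?_⟩
    rcases mem_union.1 hC with h | h
    · exact hScard C h
    · exact (mem_filter.1 h).2
  have hfinal := card_le_card hsubpow
  rw [card_union_of_disjoint hdisj2, card_powersetCard, card_univ, Fintype.card_fin] at hfinal
  omega

lemma choose_sum_pascal (m t : ℕ) :
    2 * ∑ k ∈ Finset.range (t + 1), m.choose k
      = (∑ k ∈ Finset.range (t + 1), (m + 1).choose k) + m.choose t := by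
  induction t with
  | zero => simp
  | succ t ih =>
    rw [Finset.sum_range_succ, Finset.sum_range_succ (f := fun k ↦ (m + 1).choose k),
      Nat.mul_add, ih, Nat.choose_succ_succ (n := m) (k := t)]
    ring

end KleitmanAux

open KleitmanAux in
theorem kleitman {n d r : ℕ} (hd : 0 < d) (hdn : d < n)
    (hr : r = 0 ∨ r = 1) (hmod : d % 2 = r % 2)
    (F : Finset (Finset (Fin n)))
    (hdiam : ∀ A ∈ F, ∀ B ∈ F, (A ∆ B).card ≤ d) :
    F.card ≤ 2 ^ r * ∑ k ∈ Finset.range (d / 2 + 1), (n - r).choose k := by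
  classical
  set t := d / 2 with htdef
  -- Case n = d + 1 : complement-free argument
  rcases eq_or_lt_of_le (Nat.succ_le_of_lt hdn) with hn1 | hn2
  · -- n = d + 1
    have hFval : F.card ≤ 2 ^ d := by
      have hdisj : Disjoint F Fᶜˢ := by
        rw [disjoint_left]
        intro A hA hAc
        rw [mem_compls] at hAc
        have := hdiam A hA Aᶜ hAc
        have huniv : A ∆ Aᶜ = Finset.univ := by
          ext z
          simp [mem_symmDiff]
        rw [huniv] at this
        simp only [card_univ, Fintype.card_fin] at this
        omega
      have h2 : F.card + Fᶜˢ.card ≤ 2 ^ n := by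
        rw [← card_union_of_disjoint hdisj]
        calc (F ∪ Fᶜˢ).card ≤ (Finset.univ : Finset (Finset (Fin n))).card :=
              card_le_card (subset_univ _)
          _ = 2 ^ n := by rw [card_univ, Fintype.card_finset, Fintype.card_fin]
      rw [card_compls] at h2
      have hpow : (2:ℕ) ^ n = 2 ^ d * 2 := by rw [← hn1, pow_succ]
      omega
    rcases hr with rfl | rfl
    · -- r = 0, d = 2t, n = 2t+1
      have hdt : d = 2 * t := by omega
      have hnt : n = 2 * t + 1 := by omega
      rw [pow_zero, one_mul]
      calc F.card ≤ 2 ^ d := hFval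
        _ = ∑ k ∈ Finset.range (t + 1), (n - 0).choose k := by
            rw [Nat.sub_zero, hnt, Nat.sum_range_choose_halfway t, hdt]
            rw [pow_mul]
            norm_num
    · -- r = 1, d = 2t+1, n = 2t+2
      have hdt : d = 2 * t + 1 := by omega
      have hnt : n - 1 = 2 * t + 1 := by omega
      calc F.card ≤ 2 ^ d := hFval
        _ = 2 ^ 1 * ∑ k ∈ Finset.range (t + 1), (n - 1).choose k := by
            rw [hnt, Nat.sum_range_choose_halfway t, hdt]
            rw [pow_succ, pow_mul]
            norm_num
            ring
  · -- n ≥ d + 2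
    have hn : d + 2 ≤ n := hn2
    obtain ⟨ℬ, hcardℬ, hdiamℬ, hdownℬ⟩ := exists_downset F hdiam
    have hunion : ∀ A ∈ ℬ, ∀ B ∈ ℬ, (A ∪ B).card ≤ d := by
      intro A hA B hB
      have hsd : A \ B ∈ ℬ := hdownℬ A hA (A \ B) sdiff_subset
      have he : (A \ B) ∆ B = A ∪ B := by
        ext z
        simp [mem_symmDiff]
      have := hdiamℬ _ hsd _ hB
      rwa [he] at this
    have hsize : ∀ A ∈ ℬ, A.card ≤ d := by
      intro A hA
      have := hunion A hA A hA
      rwa [union_self] at this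
    set c : ℕ → ℕ := fun ℓ ↦ ({A ∈ ℬ | A.card = ℓ}).card with hc
    have hsum : ℬ.card = ∑ ℓ ∈ Finset.range (d + 1), c ℓ := by
      rw [hc]
      exact card_eq_sum_card_fiberwise fun A hA ↦ mem_range.2 (by
        have := hsize A hA; omega)
    have hc0 : c 0 ≤ 1 := by
      rw [hc]
      refine card_le_one.2 fun A hA B hB ↦ ?_
      rw [mem_filter, card_eq_zero] at hA hB
      rw [hA.2, hB.2]
    have hpair : ∀ ℓ ∈ Finset.Ico 1 (t + 1), c (d + 1 - ℓ) + c ℓ ≤ n.choose ℓ := by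
      intro ℓ hℓ
      rw [mem_Ico] at hℓ
      exact level_pair ℬ hunion hn ℓ hℓ.1 (by omega)
    -- reflection of upper levels
    rcases hr with rfl | rfl
    · -- r = 0 (even)
      have hdt : d = 2 * t := by omega
      have ht1 : 1 ≤ t := by omega
      have hreflect : ∑ ℓ ∈ Finset.Ico (t + 1) (d + 1), c ℓ
          = ∑ ℓ ∈ Finset.Ico 1 (t + 1), c (d + 1 - ℓ) := by
        refine Finset.sum_nbij' (fun ℓ ↦ d + 1 - ℓ) (fun ℓ ↦ d + 1 - ℓ) ?_ ?_ ?_ ?_ ?_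
        · intro a ha; rw [mem_Ico] at ha; rw [mem_Ico]; omega
        · intro a ha; rw [mem_Ico] at ha; rw [mem_Ico]; omega
        · intro a ha; rw [mem_Ico] at ha; omega
        · intro a ha; rw [mem_Ico] at ha; omega
        · intro a ha; rw [mem_Ico] at ha; congr 1; omega
      have hsplit : ∑ ℓ ∈ Finset.range (d + 1), c ℓ
          = c 0 + ∑ ℓ ∈ Finset.Ico 1 (t + 1), c ℓ + ∑ ℓ ∈ Finset.Ico (t + 1) (d + 1), c ℓ := by
        rw [Finset.range_eq_Ico, ← Finset.sum_Ico_consecutive c (by omega : 0 ≤ t + 1) (by omega : t + 1 ≤ d + 1),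
          Finset.sum_eq_sum_Ico_succ_bot (by omega : 0 < t + 1) c]
      have hchoosesplit : ∑ ℓ ∈ Finset.range (t + 1), n.choose ℓ
          = 1 + ∑ ℓ ∈ Finset.Ico 1 (t + 1), n.choose ℓ := by
        rw [Finset.range_eq_Ico, Finset.sum_eq_sum_Ico_succ_bot (by omega : 0 < t + 1), Nat.choose_zero_right]
      rw [pow_zero, one_mul, Nat.sub_zero, ← hcardℬ, hsum, hsplit, hreflect, hchoosesplit]
      have hdistrib : ∑ ℓ ∈ Finset.Ico 1 (t + 1), c ℓ + ∑ ℓ ∈ Finset.Ico 1 (t + 1), c (d + 1 - ℓ)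
          = ∑ ℓ ∈ Finset.Ico 1 (t + 1), (c ℓ + c (d + 1 - ℓ)) := Finset.sum_add_distrib.symm
      have hle : ∑ ℓ ∈ Finset.Ico 1 (t + 1), (c ℓ + c (d + 1 - ℓ))
          ≤ ∑ ℓ ∈ Finset.Ico 1 (t + 1), n.choose ℓ :=
        Finset.sum_le_sum fun ℓ hℓ ↦ by have := hpair ℓ hℓ; omega
      omega
    · -- r = 1 (odd)
      have hdt : d = 2 * t + 1 := by omega
      have hreflect : ∑ ℓ ∈ Finset.Ico (t + 2) (d + 1), c ℓ
          = ∑ ℓ ∈ Finset.Ico 1 (t + 1), c (d + 1 - ℓ) := by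
        refine Finset.sum_nbij' (fun ℓ ↦ d + 1 - ℓ) (fun ℓ ↦ d + 1 - ℓ) ?_ ?_ ?_ ?_ ?_
        · intro a ha; rw [mem_Ico] at ha; rw [mem_Ico]; omega
        · intro a ha; rw [mem_Ico] at ha; rw [mem_Ico]; omega
        · intro a ha; rw [mem_Ico] at ha; omega
        · intro a ha; rw [mem_Ico] at ha; omega
        · intro a ha; rw [mem_Ico] at ha; congr 1; omega
      have hsplit : ∑ ℓ ∈ Finset.range (d + 1), c ℓ
          = c 0 + ∑ ℓ ∈ Finset.Ico 1 (t + 1), c ℓ + c (t + 1)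
            + ∑ ℓ ∈ Finset.Ico (t + 2) (d + 1), c ℓ := by
        rw [Finset.range_eq_Ico,
          ← Finset.sum_Ico_consecutive c (by omega : 0 ≤ t + 1) (by omega : t + 1 ≤ d + 1),
          Finset.sum_eq_sum_Ico_succ_bot (by omega : 0 < t + 1) c,
          Finset.sum_eq_sum_Ico_succ_bot (by omega : t + 1 < d + 1) c]
        ring
      -- EKR bound on middle level
      have hekr : c (t + 1) ≤ (n - 1).choose t := by
        rw [hc]
        have hint : (({A ∈ ℬ | A.card = t + 1} : Finset (Finset (Fin n))) :
            Set (Finset (Fin n))).Intersecting := by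
          intro A hA B hB hdisjAB
          rw [mem_coe, mem_filter] at hA hB
          have h1 := hunion A hA.1 B hB.1
          have h2 := card_union_add_card_inter A B
          have h3 : (A ∩ B).card = 0 := by
            rw [disjoint_iff_inter_eq_empty] at hdisjAB
            rw [hdisjAB, card_empty]
          rw [h3, hA.2, hB.2] at h2
          omega
        have hsized : (({A ∈ ℬ | A.card = t + 1} : Finset (Finset (Fin n))) :
            Set (Finset (Fin n))).Sized (t + 1) := by
          intro A hA
          rw [mem_coe, mem_filter] at hA
          exact hA.2
        have := Finset.erdos_ko_rado hint hsized (by omega : t + 1 ≤ n / 2)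
        simpa using this
      have hchoosesplit : ∑ ℓ ∈ Finset.range (t + 1), n.choose ℓ
          = 1 + ∑ ℓ ∈ Finset.Ico 1 (t + 1), n.choose ℓ := by
        rw [Finset.range_eq_Ico, Finset.sum_eq_sum_Ico_succ_bot (by omega : 0 < t + 1), Nat.choose_zero_right]
      have hkey : ℬ.card ≤ (∑ ℓ ∈ Finset.range (t + 1), n.choose ℓ) + (n - 1).choose t := by
        rw [hsum, hsplit, hreflect, hchoosesplit]
        have hdistrib : ∑ ℓ ∈ Finset.Ico 1 (t + 1), c ℓ + ∑ ℓ ∈ Finset.Ico 1 (t + 1), c (d + 1 - ℓ)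
            = ∑ ℓ ∈ Finset.Ico 1 (t + 1), (c ℓ + c (d + 1 - ℓ)) := Finset.sum_add_distrib.symm
        have hle : ∑ ℓ ∈ Finset.Ico 1 (t + 1), (c ℓ + c (d + 1 - ℓ))
            ≤ ∑ ℓ ∈ Finset.Ico 1 (t + 1), n.choose ℓ :=
          Finset.sum_le_sum fun ℓ hℓ ↦ by have := hpair ℓ hℓ; omega
        omega
      have hfinal := choose_sum_pascal (n - 1) t
      have hm1 : n - 1 + 1 = n := by omega
      rw [hm1] at hfinal
      rw [← hcardℬ]
      calc ℬ.card ≤ (∑ ℓ ∈ Finset.range (t + 1), n.choose ℓ) + (n - 1).choose t := hkey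
        _ = 2 * ∑ k ∈ Finset.range (t + 1), (n - 1).choose k := hfinal.symm
        _ = 2 ^ 1 * ∑ k ∈ Finset.range (t + 1), (n - 1).choose k := by ring
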